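/- Let G=(V,E) be a finite connected weighted graph, λ ∈ ℝ and f : V → ℝ with λ f̄ ≠ 0 (where f̄ is the mean of f). Then the functional J_λ(u) = (1/2)∫_V|∇u|² dμ + (λ/2)∫_V(e^u−1)² dμ + ∫_V fu dμ on X ≅ ℝ^ℓ satisfies the Palais–Smale condition at every level c ∈ ℝ: every sequence {u_k} with J_λ(u_k) → c and J_λ'(u_k) → 0 has a subsequence converging (uniformly on V) to a critical point of J_λ. -/

import Mathlib

open Real Finset Filter Topology

variable {V : Type*}

/-- Graph Laplacian: Δu(x) = (1/μ x) Σ_y ω_{xy}(u(y) − u(x)); non-edges have weight 0. -/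
noncomputable def glap [Fintype V] (μ : V → ℝ) (w : V → V → ℝ) (u : V → ℝ) (x : V) : ℝ :=
  (1 / μ x) * ∑ y, w x y * (u y - u x)

/-- Integral over the graph: ∫_V g dμ = Σ_x μ(x) g(x). -/
noncomputable def intg [Fintype V] (μ : V → ℝ) (g : V → ℝ) : ℝ := ∑ x, μ x * g x

/-- Dirichlet energy ∫_V |∇u|² dμ = (1/2) Σ_x Σ_y ω_{xy}(u(y) − u(x))². -/
noncomputable def gradSq [Fintype V] (w : V → V → ℝ) (u : V → ℝ) : ℝ :=
  (1/2) * ∑ x, ∑ y, w x y * (u y - u x)^2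

/-- Connectivity: any two vertices are joined by a finite chain of positive-weight edges. -/
def GConn (w : V → V → ℝ) : Prop :=
  ∀ x y : V, Relation.ReflTransGen (fun a b => 0 < w a b) x y

/-- Sup norm ‖u‖_∞. -/
noncomputable def supnorm [Fintype V] (u : V → ℝ) : ℝ := ⨆ x, |u x|

lemma supnorm_eq_norm [Fintype V] [Nonempty V] (u : V → ℝ) : supnorm u = ‖u‖ := by
  apply le_antisymm
  · exact ciSup_le fun x => by simpa using norm_le_pi_norm u x
  · have h : ∀ x, ‖u x‖ ≤ supnorm u := by
      intro x
      simpa [supnorm] using le_ciSup (Finite.bddAbove_range _) x (f := fun x => |u x|)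
    have h0 : (0:ℝ) ≤ supnorm u := le_trans (norm_nonneg (u (Classical.arbitrary V))) (h _)
    exact (pi_norm_le_iff_of_nonneg h0).2 h

lemma intg_glap [Fintype V] (μ : V → ℝ) (w : V → V → ℝ) (hμ : ∀ x, 0 < μ x)
    (hsymm : ∀ x y, w x y = w y x) (u : V → ℝ) : intg μ (glap μ w u) = 0 := by
  unfold intg glap
  have h1 : ∀ x : V, μ x * ((1 / μ x) * ∑ y, w x y * (u y - u x)) = ∑ y, w x y * (u y - u x) := by
    intro x
    rw [← mul_assoc, mul_one_div, div_self (hμ x).ne', one_mul]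
  rw [Finset.sum_congr rfl fun x _ => h1 x]
  have hswap : (∑ x : V, ∑ y : V, w x y * (u y - u x))
      = ∑ x : V, ∑ y : V, w y x * (u x - u y) := Finset.sum_comm
  have hzero : (∑ x : V, ∑ y : V, (w x y * (u y - u x) + w y x * (u x - u y))) = 0 := by
    apply Finset.sum_eq_zero; intro x _
    apply Finset.sum_eq_zero; intro y _
    rw [hsymm x y]; ring
  simp only [Finset.sum_add_distrib] at hzero
  linarith [hswap, hzero]

lemma glap_affine [Fintype V] (μ : V → ℝ) (w : V → V → ℝ) (u : V → ℝ) (s c : ℝ) (x : V) :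
    glap μ w (fun z => s * u z + c) x = s * glap μ w u x := by
  unfold glap
  have h : ∀ y : V, w x y * ((s * u y + c) - (s * u x + c)) = s * (w x y * (u y - u x)) := by
    intro y; ring
  rw [Finset.sum_congr rfl fun y _ => h y, ← Finset.mul_sum]
  ring

lemma glap_continuous [Fintype V] (μ : V → ℝ) (w : V → V → ℝ) :
    Continuous (fun u : V → ℝ => glap μ w u) := by
  apply continuous_pi; intro x
  unfold glap
  apply Continuous.mul continuous_const
  apply continuous_finset_sum
  intro y _
  exact Continuous.mul continuous_const (Continuous.sub (continuous_apply y) (continuous_apply x))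

lemma harmonic_const [Fintype V] [Nonempty V] (μ : V → ℝ) (w : V → V → ℝ)
    (hμ : ∀ x, 0 < μ x) (hnn : ∀ x y, 0 ≤ w x y) (hconn : GConn w) (u : V → ℝ)
    (hh : ∀ x, glap μ w u x = 0) : ∀ x y, u x = u y := by
  obtain ⟨x₀, hx₀⟩ := Finite.exists_max u
  -- key step: if u a = u x₀ (the max) then any positive-weight neighbor b has u b = u x₀
  have step : ∀ a b : V, u a = u x₀ → 0 < w a b → u b = u x₀ := by
    intro a b ha hab
    have hsum : ∑ y, w a y * (u y - u a) = 0 := by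
      have := hh a
      unfold glap at this
      rcases mul_eq_zero.1 this with h | h
      · exact absurd h (one_div_ne_zero (hμ a).ne')
      · exact h
    have hterm : ∀ y ∈ Finset.univ, w a y * (u y - u a) ≤ 0 := by
      intro y _
      apply mul_nonpos_of_nonneg_of_nonpos (hnn a y)
      have := hx₀ y
      rw [ha]; linarith
    have := (Finset.sum_eq_zero_iff_of_nonpos hterm).1 hsum b (Finset.mem_univ b)
    rcases mul_eq_zero.1 this with h | h
    · exact absurd h hab.ne'
    · rw [← ha]; linarith [sub_eq_zero.1 h]
  -- propagate along chains from x₀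
  have reach : ∀ y : V, u y = u x₀ := by
    intro y
    induction hconn x₀ y with
    | refl => rfl
    | tail _ hbc ih => exact step _ _ ih hbc
  intro x y; rw [reach x, reach y]

lemma osc_bound [Fintype V] [Nonempty V] (μ : V → ℝ) (w : V → V → ℝ)
    (hμ : ∀ x, 0 < μ x) (hnn : ∀ x y, 0 ≤ w x y) (hconn : GConn w) :
    ∃ C : ℝ, 0 < C ∧ ∀ u : V → ℝ, ∀ x y, u x - u y ≤ C * ‖glap μ w u‖ := by
  by_cases hV : ∀ a b : V, a = b
  · exact ⟨1, one_pos, fun u x y => by rw [hV x y]; simpa using norm_nonneg _⟩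
  push_neg at hV
  obtain ⟨a, b, hab⟩ := hV
  set K : Set (V → ℝ) :=
    {u | (∀ z, u z ∈ Set.Icc (0:ℝ) 1) ∧ (∃ z, u z = 1) ∧ (∃ z, u z = 0)} with hK_def
  have hKclosed : IsClosed K := by
    have hA : IsClosed {u : V → ℝ | ∀ z, u z ∈ Set.Icc (0:ℝ) 1} := by
      have : {u : V → ℝ | ∀ z, u z ∈ Set.Icc (0:ℝ) 1}
          = ⋂ z : V, (fun u : V → ℝ => u z) ⁻¹' Set.Icc (0:ℝ) 1 := by
        ext u; simp
      rw [this]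
      exact isClosed_iInter fun z => (isClosed_Icc).preimage (continuous_apply z)
    have hB : IsClosed {u : V → ℝ | ∃ z, u z = 1} := by
      have : {u : V → ℝ | ∃ z, u z = 1} = ⋃ z : V, {u : V → ℝ | u z = 1} := by ext u; simp
      rw [this]
      exact isClosed_iUnion_of_finite fun z => isClosed_eq (continuous_apply z) continuous_const
    have hC : IsClosed {u : V → ℝ | ∃ z, u z = 0} := by
      have : {u : V → ℝ | ∃ z, u z = 0} = ⋃ z : V, {u : V → ℝ | u z = 0} := by ext u; simp
      rw [this]
      exact isClosed_iUnion_of_finite fun z => isClosed_eq (continuous_apply z) continuous_const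
    have : K = {u : V → ℝ | ∀ z, u z ∈ Set.Icc (0:ℝ) 1}
        ∩ ({u : V → ℝ | ∃ z, u z = 1} ∩ {u : V → ℝ | ∃ z, u z = 0}) := by
      ext u; simp [hK_def, and_assoc]
    rw [this]
    exact hA.inter (hB.inter hC)
  have hKcompact : IsCompact K := by
    apply (isCompact_univ_pi (fun _ : V => isCompact_Icc (a := (0:ℝ)) (b := 1))).of_isClosed_subset
      hKclosed
    intro u hu
    simp only [Set.mem_pi, Set.mem_univ, forall_true_left]
    exact hu.1
  classical
  have hKne : K.Nonempty := by
    refine ⟨fun z => if z = a then 1 else 0, fun z => ?_, ⟨a, by simp⟩, ⟨b, by simp [hab.symm]⟩⟩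
    by_cases h : z = a <;> simp [h]
  have hFcont : Continuous fun u : V → ℝ => ‖glap μ w u‖ := (glap_continuous μ w).norm
  obtain ⟨u₀, hu₀K, hmin⟩ := hKcompact.exists_isMinOn hKne hFcont.continuousOn
  set δ := ‖glap μ w u₀‖ with hδ_def
  have hδpos : 0 < δ := by
    rcases lt_or_eq_of_le (norm_nonneg (glap μ w u₀)) with h | h
    · exact h
    · exfalso
      have hg0 : glap μ w u₀ = 0 := by rw [← norm_eq_zero]; exact h.symm
      obtain ⟨z1, hz1⟩ := hu₀K.2.1
      obtain ⟨z0, hz0⟩ := hu₀K.2.2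
      have := harmonic_const μ w hμ hnn hconn u₀ (fun x => congrFun hg0 x) z1 z0
      rw [hz1, hz0] at this; norm_num at this
  refine ⟨1/δ, by positivity, fun u x y => ?_⟩
  rcases le_or_gt (u x - u y) 0 with h | h
  · calc u x - u y ≤ 0 := h
    _ ≤ 1/δ * ‖glap μ w u‖ := by positivity
  obtain ⟨p, hp⟩ := Finite.exists_max u
  obtain ⟨q, hq⟩ := Finite.exists_min u
  set s := u p - u q with hs_def
  have hs : 0 < s := by have := hp x; have := hq y; simp only [hs_def]; linarith
  set v : V → ℝ := fun z => (1/s) * u z + (-(u q)/s) with hv_def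
  have hvz : ∀ z, v z = (u z - u q)/s := by
    intro z; simp only [hv_def]; ring
  have hvK : v ∈ K := by
    refine ⟨fun z => ?_, ⟨p, ?_⟩, ⟨q, ?_⟩⟩
    · rw [hvz z]
      constructor
      · exact div_nonneg (by linarith [hq z]) hs.le
      · rw [div_le_one hs]; simp only [hs_def]; linarith [hp z]
    · rw [hvz p]; exact div_self hs.ne'
    · rw [hvz q]; simp
  have hglapv : glap μ w v = (1/s) • glap μ w u := by
    funext z
    simp only [hv_def, Pi.smul_apply, smul_eq_mul]
    exact glap_affine μ w u (1/s) (-(u q)/s) z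
  have hnormv : ‖glap μ w v‖ = (1/s) * ‖glap μ w u‖ := by
    rw [hglapv, norm_smul, Real.norm_eq_abs, abs_of_pos (by positivity : (0:ℝ) < 1/s)]
  have hge : δ ≤ (1/s) * ‖glap μ w u‖ := by
    have := hmin hvK
    simpa [hnormv] using this
  have h1 : δ * s ≤ ‖glap μ w u‖ := by
    calc δ * s = s * δ := mul_comm _ _
    _ ≤ s * ((1/s) * ‖glap μ w u‖) := mul_le_mul_of_nonneg_left hge hs.le
    _ = ‖glap μ w u‖ := by field_simp
  have h2 : s ≤ ‖glap μ w u‖ / δ := (le_div_iff₀ hδpos).2 (by linarith)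
  have h3 : s ≤ 1/δ * ‖glap μ w u‖ := by rw [one_div_mul_eq_div]; exact h2
  have hx := hp x; have hy := hq y
  simp only [hs_def] at h3
  linarith

/-- The Palais–Smale condition for J_λ when λ f̄ ≠ 0. -/
theorem stmt19 [Fintype V] [Nonempty V] (μ : V → ℝ) (w : V → V → ℝ)
    (hμ : ∀ x, 0 < μ x) (hsymm : ∀ x y, w x y = w y x) (hnn : ∀ x y, 0 ≤ w x y)
    (hconn : GConn w) (l : ℝ) (f : V → ℝ)
    (hlf : l * ((1 / ∑ x, μ x) * intg μ f) ≠ 0) :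
    ∀ c : ℝ, ∀ u : ℕ → V → ℝ,
      Filter.Tendsto (fun k => (1/2) * gradSq w (u k)
          + (l/2) * intg μ (fun x => (Real.exp (u k x) - 1)^2)
          + intg μ (fun x => f x * u k x)) Filter.atTop (nhds c) →
      Filter.Tendsto (fun k => supnorm (fun x =>
          -glap μ w (u k) x + l * Real.exp (u k x) * (Real.exp (u k x) - 1) + f x))
        Filter.atTop (nhds 0) →
      ∃ ustar : V → ℝ,
        (∀ x, -glap μ w ustar x
            + l * Real.exp (ustar x) * (Real.exp (ustar x) - 1) + f x = 0) ∧
        ∃ φ : ℕ → ℕ, StrictMono φ ∧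
          Filter.Tendsto (fun k => supnorm (fun x => u (φ k) x - ustar x))
            Filter.atTop (nhds 0) := by
  intro c u _hJ hDJ
  set g : ℕ → V → ℝ := fun k x =>
    -glap μ w (u k) x + l * Real.exp (u k x) * (Real.exp (u k x) - 1) + f x with hg_def
  -- basic nonvanishing facts
  obtain ⟨hl, hrest⟩ := mul_ne_zero_iff.1 hlf
  obtain ⟨-, hf⟩ := mul_ne_zero_iff.1 hrest
  have hμV : (0:ℝ) < ∑ x, μ x := Finset.sum_pos (fun x _ => hμ x) Finset.univ_nonempty
  set μV := ∑ x, μ x with hμV_def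
  -- the norms of g k tend to zero
  have hgn : Tendsto (fun k => ‖g k‖) atTop (nhds 0) := by
    have : ∀ k, supnorm (g k) = ‖g k‖ := fun k => supnorm_eq_norm (g k)
    simpa [this] using (show Tendsto (fun k => supnorm (g k)) atTop (nhds 0) from hDJ)
  have habs : ∀ (k : ℕ) (x : V), |g k x| ≤ ‖g k‖ := by
    intro k x; simpa using norm_le_pi_norm (g k) x
  -- integral identity:  l * I k = ∫ g k - ∫ f
  set I : ℕ → ℝ := fun k => intg μ (fun x => Real.exp (u k x) * (Real.exp (u k x) - 1))
    with hI_def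
  have hIdent : ∀ k, l * I k = intg μ (g k) - intg μ f := by
    intro k
    have h0 := intg_glap μ w hμ hsymm (u k)
    have hexp : intg μ (g k) = - intg μ (glap μ w (u k)) + l * I k + intg μ f := by
      simp only [hg_def, hI_def, intg, ← Finset.sum_neg_distrib, ← Finset.sum_add_distrib,
        Finset.mul_sum]
      apply Finset.sum_congr rfl; intro x _; ring
    rw [h0] at hexp; linarith
  -- I k → A := -∫f / l ≠ 0
  set A : ℝ := -(intg μ f)/l with hA_def
  have hA : A ≠ 0 := by
    simp only [hA_def, ne_eq, div_eq_zero_iff, neg_eq_zero]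
    push_neg; exact ⟨hf, hl⟩
  have hintg_le : ∀ h : V → ℝ, |intg μ h| ≤ μV * ‖h‖ := by
    intro h
    calc |intg μ h| ≤ ∑ x, |μ x * h x| := Finset.abs_sum_le_sum_abs _ _
    _ = ∑ x, μ x * |h x| := by
        apply Finset.sum_congr rfl; intro x _
        rw [abs_mul, abs_of_pos (hμ x)]
    _ ≤ ∑ x, μ x * ‖h‖ := by
        apply Finset.sum_le_sum; intro x _
        exact mul_le_mul_of_nonneg_left (by simpa using norm_le_pi_norm h x) (hμ x).le
    _ = μV * ‖h‖ := by rw [← Finset.sum_mul]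
  have hIg : Tendsto (fun k => intg μ (g k)) atTop (nhds 0) := by
    apply squeeze_zero_norm (fun k => hintg_le (g k))
    simpa using hgn.const_mul μV
  have hItend : Tendsto I atTop (nhds A) := by
    have h1 : Tendsto (fun k => (intg μ (g k) - intg μ f)/l) atTop (nhds A) := by
      have := (hIg.sub tendsto_const_nhds (b := intg μ f)).div_const l
      simpa [hA_def] using this
    convert h1 using 2 with k
    have := hIdent k
    field_simp
    linarith
  -- uniform upper bound on exp (u k x)
  obtain ⟨B, hB⟩ := hItend.bddAbove_range
  have hBle : ∀ k, I k ≤ B := fun k => hB (Set.mem_range_self k)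
  obtain ⟨xm, hxm⟩ := Finite.exists_min μ
  set Q : ℝ := (B + μV/4) / μ xm with hQ_def
  have hkey : ∀ (k : ℕ) (x : V), (Real.exp (u k x) - 1/2)^2 ≤ Q := by
    intro k x
    have h1 : μ x * (Real.exp (u k x) - 1/2)^2
        ≤ ∑ z, μ z * (Real.exp (u k z) - 1/2)^2 := by
      apply Finset.single_le_sum (f := fun z => μ z * (Real.exp (u k z) - 1/2)^2)
        (fun z _ => mul_nonneg (hμ z).le (sq_nonneg _)) (Finset.mem_univ x)
    have h2 : ∑ z, μ z * (Real.exp (u k z) - 1/2)^2 = I k + μV/4 := by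
      have : ∀ z : V, μ z * (Real.exp (u k z) - 1/2)^2
          = μ z * (Real.exp (u k z) * (Real.exp (u k z) - 1)) + μ z / 4 := by
        intro z; ring
      rw [Finset.sum_congr rfl fun z _ => this z, Finset.sum_add_distrib,
        ← Finset.sum_div]
      simp [hI_def, intg, hμV_def]
    have h3 : μ x * (Real.exp (u k x) - 1/2)^2 ≤ B + μV/4 := by
      rw [h2] at h1; linarith [hBle k]
    rw [hQ_def, le_div_iff₀ (hμ xm)]
    calc (Real.exp (u k x) - 1/2)^2 * μ xm ≤ (Real.exp (u k x) - 1/2)^2 * μ x :=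
      mul_le_mul_of_nonneg_left (hxm x) (by positivity)
    _ ≤ B + μV/4 := by rw [mul_comm]; exact h3
  have hQnn : 0 ≤ Q := le_trans (by positivity) (hkey 0 (Classical.arbitrary V))
  set Emax : ℝ := 1/2 + Real.sqrt Q with hE_def
  have hEpos : 0 < Emax := by
    have := Real.sqrt_nonneg Q; simp only [hE_def]; linarith
  have hE : ∀ (k : ℕ) (x : V), Real.exp (u k x) ≤ Emax := by
    intro k x
    have h1 : Real.exp (u k x) - 1/2 ≤ |Real.exp (u k x) - 1/2| := le_abs_self _
    have h2 : |Real.exp (u k x) - 1/2| = Real.sqrt ((Real.exp (u k x) - 1/2)^2) :=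
      (Real.sqrt_sq_eq_abs _).symm
    have h3 : Real.sqrt ((Real.exp (u k x) - 1/2)^2) ≤ Real.sqrt Q :=
      Real.sqrt_le_sqrt (hkey k x)
    simp only [hE_def]; linarith
  -- uniform bound on the laplacian
  set P : ℝ := Emax * (Emax + 1) with hP_def
  have hPb : ∀ (k : ℕ) (x : V), |Real.exp (u k x) * (Real.exp (u k x) - 1)| ≤ P := by
    intro k x
    have he : 0 < Real.exp (u k x) := Real.exp_pos _
    have heE := hE k x
    rw [abs_mul, abs_of_pos he]
    have h1 : |Real.exp (u k x) - 1| ≤ Real.exp (u k x) + 1 := by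
      rw [abs_le]; constructor <;> linarith
    calc Real.exp (u k x) * |Real.exp (u k x) - 1|
        ≤ Real.exp (u k x) * (Real.exp (u k x) + 1) :=
          mul_le_mul_of_nonneg_left h1 he.le
    _ ≤ Emax * (Emax + 1) := by nlinarith
    _ = P := hP_def.symm
  obtain ⟨G, hG⟩ := hgn.bddAbove_range
  have hGb : ∀ k, ‖g k‖ ≤ G := fun k => hG (Set.mem_range_self k)
  set Dl : ℝ := |l| * P + ‖f‖ + G with hD_def
  have hlapb : ∀ (k : ℕ) (x : V), |glap μ w (u k) x| ≤ Dl := by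
    intro k x
    have : glap μ w (u k) x
        = l * (Real.exp (u k x) * (Real.exp (u k x) - 1)) + f x - g k x := by
      simp only [hg_def]; ring
    rw [this]
    calc |l * (Real.exp (u k x) * (Real.exp (u k x) - 1)) + f x - g k x|
        ≤ |l * (Real.exp (u k x) * (Real.exp (u k x) - 1))| + |f x| + |g k x| := by
          exact (abs_sub _ _).trans (by gcongr; exact abs_add_le _ _)
    _ ≤ |l| * P + ‖f‖ + G := by
        gcongr
        · rw [abs_mul]; exact mul_le_mul_of_nonneg_left (hPb k x) (abs_nonneg l)
        · simpa using norm_le_pi_norm f x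
        · exact (habs k x).trans (hGb k)
  have hDnn : 0 ≤ Dl := le_trans (abs_nonneg _) (hlapb 0 (Classical.arbitrary V))
  have hlapnorm : ∀ k, ‖glap μ w (u k)‖ ≤ Dl := by
    intro k
    apply (pi_norm_le_iff_of_nonneg hDnn).2
    intro x; simpa using hlapb k x
  -- eventual lower bound on max exp (u k ·)
  set ε : ℝ := min 1 (|A| / (4 * μV)) with hε_def
  have hεpos : 0 < ε := lt_min one_pos (by positivity)
  have hev : ∀ᶠ k in atTop, |A|/2 ≤ |I k| := by
    have h1 : ∀ᶠ k in atTop, dist (I k) A < |A|/2 :=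
      hItend (Metric.ball_mem_nhds A (by positivity))
    filter_upwards [h1] with k hk
    rw [Real.dist_eq] at hk
    have := abs_sub_abs_le_abs_sub A (I k)
    rw [abs_sub_comm] at this
    linarith
  have hmaxlb : ∀ᶠ k in atTop, ∃ x, ε ≤ Real.exp (u k x) := by
    filter_upwards [hev] with k hk
    by_contra hcon
    push_neg at hcon
    have hIb : |I k| ≤ μV * ε := by
      calc |I k| ≤ ∑ x, μ x * |Real.exp (u k x) * (Real.exp (u k x) - 1)| := by
            simp only [hI_def, intg]
            refine (Finset.abs_sum_le_sum_abs _ _).trans ?_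
            apply Finset.sum_le_sum; intro x _
            rw [abs_mul, abs_of_pos (hμ x)]
      _ ≤ ∑ x, μ x * ε := by
          apply Finset.sum_le_sum; intro x _
          apply mul_le_mul_of_nonneg_left _ (hμ x).le
          have he : 0 < Real.exp (u k x) := Real.exp_pos _
          have h1 := (hcon x).le
          have h2 : ε ≤ 1 := min_le_left _ _
          rw [abs_mul, abs_of_pos he]
          have h3 : |Real.exp (u k x) - 1| = 1 - Real.exp (u k x) := by
            rw [abs_of_nonpos (by linarith)]; ring
          rw [h3]; nlinarith
      _ = μV * ε := by rw [← Finset.sum_mul]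
    have hεA : μV * ε ≤ |A|/4 := by
      have : ε ≤ |A| / (4 * μV) := min_le_right _ _
      calc μV * ε ≤ μV * (|A| / (4 * μV)) := mul_le_mul_of_nonneg_left this hμV.le
      _ = |A|/4 := by field_simp
    have : (0:ℝ) < |A| := by positivity
    linarith
  obtain ⟨C, hCpos, hosc⟩ := osc_bound μ w hμ hnn hconn
  -- eventual uniform bound R on ‖u k‖
  set M : ℝ := Real.log Emax with hM_def
  set m₀ : ℝ := Real.log ε with hm_def
  set R : ℝ := |M| + |m₀| + C * Dl with hR_def
  have hRnn : 0 ≤ R := by positivity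
  have hub : ∀ (k : ℕ) (x : V), u k x ≤ M := by
    intro k x
    rw [hM_def, ← Real.log_exp (u k x)]
    exact Real.log_le_log (Real.exp_pos _) (hE k x)
  have hbnd : ∀ᶠ k in atTop, ‖u k‖ ≤ R := by
    filter_upwards [hmaxlb] with k hk
    obtain ⟨x, hx⟩ := hk
    have hxlb : m₀ ≤ u k x := by
      rw [hm_def, ← Real.log_exp (u k x)]
      exact Real.log_le_log hεpos hx
    apply (pi_norm_le_iff_of_nonneg hRnn).2
    intro z
    rw [Real.norm_eq_abs, abs_le]
    constructor
    · have h1 : u k x - u k z ≤ C * ‖glap μ w (u k)‖ := hosc (u k) x z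
      have h2 : C * ‖glap μ w (u k)‖ ≤ C * Dl :=
        mul_le_mul_of_nonneg_left (hlapnorm k) hCpos.le
      have h3 := neg_abs_le m₀
      simp only [hR_def]
      have h4 := abs_nonneg M
      linarith
    · have := hub k z
      have h4 := le_abs_self M
      have h5 := abs_nonneg m₀
      have h6 : 0 ≤ C * Dl := by positivity
      simp only [hR_def]; linarith
  obtain ⟨N₁, hN₁⟩ := eventually_atTop.1 hbnd
  -- compactness: extract a convergent subsequence of k ↦ u (k + N₁)
  have hmem : ∀ j : ℕ, u (j + N₁) ∈ Metric.closedBall (0 : V → ℝ) R := by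
    intro j
    rw [Metric.mem_closedBall, dist_zero_right]
    exact hN₁ (j + N₁) (Nat.le_add_left _ _)
  obtain ⟨ustar, -, φ, hφ, hconv⟩ :=
    (isCompact_closedBall (0 : V → ℝ) R).tendsto_subseq hmem
  set ψ : ℕ → ℕ := fun j => φ j + N₁ with hψ_def
  have hψmono : StrictMono ψ := fun a b hab => by
    simp only [hψ_def]; exact Nat.add_lt_add_right (hφ hab) N₁
  have hconv' : Tendsto (fun j => u (ψ j)) atTop (nhds ustar) := hconv
  refine ⟨ustar, ?_, ψ, hψmono, ?_⟩
  · -- ustar is a critical point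
    intro x
    have hFcont : Continuous (fun v : V → ℝ =>
        -glap μ w v x + l * Real.exp (v x) * (Real.exp (v x) - 1) + f x) := by
      apply Continuous.add
      apply Continuous.add
      · exact ((continuous_apply x).comp (glap_continuous μ w)).neg
      · apply Continuous.mul
        · exact continuous_const.mul (Real.continuous_exp.comp (continuous_apply x))
        · exact (Real.continuous_exp.comp (continuous_apply x)).sub continuous_const
      · exact continuous_const
    have h1 : Tendsto (fun j => g (ψ j) x) atTop
        (nhds (-glap μ w ustar x + l * Real.exp (ustar x) * (Real.exp (ustar x) - 1) + f x)) := by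
      have := (hFcont.tendsto ustar).comp hconv'
      exact this
    have h2 : Tendsto (fun j => g (ψ j) x) atTop (nhds 0) := by
      apply squeeze_zero_norm (fun j => habs (ψ j) x)
      exact hgn.comp (hψmono.tendsto_atTop)
    exact tendsto_nhds_unique h1 h2
  · -- uniform convergence
    have h1 : Tendsto (fun j => ‖u (ψ j) - ustar‖) atTop (nhds 0) :=
      tendsto_iff_norm_sub_tendsto_zero.1 hconv'
    have h2 : ∀ j, supnorm (fun x => u (ψ j) x - ustar x) = ‖u (ψ j) - ustar‖ := by
      intro j
      rw [supnorm_eq_norm]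
      congr 1
    simpa [h2] using h1
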